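/- (Observation (2) of §6.2: localized tangent vector fields with prescribed electric and magnetic mode-1 moments.) For every nonempty open subset U ⊆ S² there exist a constant C > 0 and a linear map Ψ: ℝ⁶ → (maps S² → ℝ³) such that for every (α₁,α₂,α₃,β₁,β₂,β₃) ∈ ℝ⁶ the field X := Ψ(α,β) is a smooth tangent vector field on S², has support contained in U, satisfies the electric moment conditions ∫_{S²} ⟨X, Eₘ⟩ dσ = αₘ and the magnetic moment conditions ∫_{S²} ⟨X, Hₘ⟩ dσ = βₘ for m = 1,2,3, and is bounded by sup_{S²} ‖X‖ ≤ C·max_{m}(|αₘ|, |βₘ|). -/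

import Mathlib

open MeasureTheory Metric
open scoped Manifold

noncomputable section

instance : Fact (Module.finrank ℝ (EuclideanSpace ℝ (Fin 3)) = 2 + 1) := ⟨by simp⟩

/-- The unit sphere `S²` in Euclidean `ℝ³`. -/
abbrev UnitSphere : Type := Metric.sphere (0 : EuclideanSpace ℝ (Fin 3)) 1

/-- The standard surface measure `σ` on `S²`. -/
def sphereMeasure : Measure UnitSphere :=
  (volume : Measure (EuclideanSpace ℝ (Fin 3))).toSphere

/-- The standard basis vectors `e₁, e₂, e₃` of `ℝ³`. -/
def stdBasis (m : Fin 3) : EuclideanSpace ℝ (Fin 3) := EuclideanSpace.single m 1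

/-- The cross product on Euclidean `ℝ³`. -/
def cross3 (x y : EuclideanSpace ℝ (Fin 3)) : EuclideanSpace ℝ (Fin 3) :=
  WithLp.toLp 2 ![x 1 * y 2 - x 2 * y 1, x 2 * y 0 - x 0 * y 2, x 0 * y 1 - x 1 * y 0]

/-- The electric mode-1 tangent fields `Eₘ(x) := eₘ - ⟨x,eₘ⟩·x`. -/
def Efield (m : Fin 3) (x : EuclideanSpace ℝ (Fin 3)) : EuclideanSpace ℝ (Fin 3) :=
  stdBasis m - (inner ℝ x (stdBasis m) : ℝ) • x

/-- The magnetic mode-1 tangent fields `Hₘ(x) := x × eₘ`. -/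
def Hfield (m : Fin 3) (x : EuclideanSpace ℝ (Fin 3)) : EuclideanSpace ℝ (Fin 3) :=
  cross3 x (stdBasis m)


----------------------------------------------------------------
-- auxiliary material
namespace SphereAux
open Set Real
open scoped Pointwise

local notation "E3" => EuclideanSpace ℝ (Fin 3)

lemma inner3 (x y : E3) : (inner ℝ x y : ℝ) = x 0 * y 0 + x 1 * y 1 + x 2 * y 2 := by
  simp [PiLp.inner_apply, Fin.sum_univ_three]; ring

lemma cross3_apply0 (x y : E3) : cross3 x y 0 = x 1 * y 2 - x 2 * y 1 := rfl
lemma cross3_apply1 (x y : E3) : cross3 x y 1 = x 2 * y 0 - x 0 * y 2 := rfl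
lemma cross3_apply2 (x y : E3) : cross3 x y 2 = x 0 * y 1 - x 1 * y 0 := rfl

lemma inner_cross3_left (x y : E3) : (inner ℝ (cross3 x y) x : ℝ) = 0 := by
  rw [inner3, cross3_apply0, cross3_apply1, cross3_apply2]; ring

lemma cross3_sub_left (x y w : E3) : cross3 (x - y) w = cross3 x w - cross3 y w := by
  ext i
  fin_cases i
  · show cross3 (x - y) w 0 = (cross3 x w - cross3 y w) 0
    simp only [cross3_apply0, PiLp.sub_apply]; ring
  · show cross3 (x - y) w 1 = (cross3 x w - cross3 y w) 1
    simp only [cross3_apply1, PiLp.sub_apply]; ring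
  · show cross3 (x - y) w 2 = (cross3 x w - cross3 y w) 2
    simp only [cross3_apply2, PiLp.sub_apply]; ring

lemma cross3_add_left (x y w : E3) : cross3 (x + y) w = cross3 x w + cross3 y w := by
  ext i
  fin_cases i
  · show cross3 (x + y) w 0 = (cross3 x w + cross3 y w) 0
    simp only [cross3_apply0, PiLp.add_apply]; ring
  · show cross3 (x + y) w 1 = (cross3 x w + cross3 y w) 1
    simp only [cross3_apply1, PiLp.add_apply]; ring
  · show cross3 (x + y) w 2 = (cross3 x w + cross3 y w) 2
    simp only [cross3_apply2, PiLp.add_apply]; ring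

lemma cross3_smul_left (r : ℝ) (x w : E3) : cross3 (r • x) w = r • cross3 x w := by
  ext i
  fin_cases i
  · show cross3 (r • x) w 0 = (r • cross3 x w) 0
    simp only [cross3_apply0, PiLp.smul_apply, smul_eq_mul]; ring
  · show cross3 (r • x) w 1 = (r • cross3 x w) 1
    simp only [cross3_apply1, PiLp.smul_apply, smul_eq_mul]; ring
  · show cross3 (r • x) w 2 = (r • cross3 x w) 2
    simp only [cross3_apply2, PiLp.smul_apply, smul_eq_mul]; ring

lemma cross3_add_right (x y w : E3) : cross3 x (y + w) = cross3 x y + cross3 x w := by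
  ext i
  fin_cases i
  · show cross3 x (y + w) 0 = (cross3 x y + cross3 x w) 0
    simp only [cross3_apply0, PiLp.add_apply]; ring
  · show cross3 x (y + w) 1 = (cross3 x y + cross3 x w) 1
    simp only [cross3_apply1, PiLp.add_apply]; ring
  · show cross3 x (y + w) 2 = (cross3 x y + cross3 x w) 2
    simp only [cross3_apply2, PiLp.add_apply]; ring

lemma cross3_smul_right (r : ℝ) (x w : E3) : cross3 x (r • w) = r • cross3 x w := by
  ext i
  fin_cases i
  · show cross3 x (r • w) 0 = (r • cross3 x w) 0
    simp only [cross3_apply0, PiLp.smul_apply, smul_eq_mul]; ring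
  · show cross3 x (r • w) 1 = (r • cross3 x w) 1
    simp only [cross3_apply1, PiLp.smul_apply, smul_eq_mul]; ring
  · show cross3 x (r • w) 2 = (r • cross3 x w) 2
    simp only [cross3_apply2, PiLp.smul_apply, smul_eq_mul]; ring

lemma cross3_zero_right (x : E3) : cross3 x 0 = 0 := by
  ext i
  fin_cases i
  · show cross3 x 0 0 = 0; rw [cross3_apply0]; simp
  · show cross3 x 0 1 = 0; rw [cross3_apply1]; simp
  · show cross3 x 0 2 = 0; rw [cross3_apply2]; simp

lemma cross3_parallel {v b : E3} (h : cross3 v b = 0) :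
    (inner ℝ b b : ℝ) • v = (inner ℝ v b : ℝ) • b := by
  have h0 : v 1 * b 2 - v 2 * b 1 = 0 := by rw [← cross3_apply0 v b, h]; rfl
  have h1 : v 2 * b 0 - v 0 * b 2 = 0 := by rw [← cross3_apply1 v b, h]; rfl
  have h2 : v 0 * b 1 - v 1 * b 0 = 0 := by rw [← cross3_apply2 v b, h]; rfl
  ext i
  fin_cases i
  · show (inner ℝ b b : ℝ) * v 0 = (inner ℝ v b : ℝ) * b 0
    rw [inner3, inner3]; linear_combination (b 1) * h2 - (b 2) * h1
  · show (inner ℝ b b : ℝ) * v 1 = (inner ℝ v b : ℝ) * b 1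
    rw [inner3, inner3]; linear_combination (b 2) * h0 - (b 0) * h2
  · show (inner ℝ b b : ℝ) * v 2 = (inner ℝ v b : ℝ) * b 2
    rw [inner3, inner3]; linear_combination (b 0) * h1 - (b 1) * h0

lemma comp_abs_le_norm (x : E3) (i : Fin 3) : |x i| ≤ ‖x‖ := by
  rw [EuclideanSpace.norm_eq]
  rw [← Real.sqrt_sq_eq_abs]
  apply Real.sqrt_le_sqrt
  have : x i ^ 2 = ‖x i‖ ^ 2 := by rw [Real.norm_eq_abs, sq_abs]
  rw [this]
  exact Finset.single_le_sum (f := fun j => ‖x j‖ ^ 2) (fun j _ => by positivity)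
    (Finset.mem_univ i)

section ThreePoint
variable {a b x y z : E3}

lemma inner_lt_one (hx : ‖x‖ = 1) (hy : ‖y‖ = 1) (hxy : x ≠ y) : (inner ℝ x y : ℝ) < 1 := by
  have h1 : ‖x - y‖ ^ 2 = ‖x‖ ^ 2 - 2 * (inner ℝ x y : ℝ) + ‖y‖ ^ 2 := norm_sub_sq_real x y
  have h2 : 0 < ‖x - y‖ := norm_pos_iff.mpr (sub_ne_zero.mpr hxy)
  nlinarith

lemma pair_step (hx : ‖x‖ = 1) (hy : ‖y‖ = 1)
    (Hx : a - (inner ℝ x a : ℝ) • x + cross3 x b = 0)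
    (Hy : a - (inner ℝ y a : ℝ) • y + cross3 y b = 0) (hxy : x ≠ y) :
    (inner ℝ x a : ℝ) = -(inner ℝ y a : ℝ) := by
  set s : ℝ := (inner ℝ x a : ℝ)
  set t : ℝ := (inner ℝ y a : ℝ)
  have hsub : s • x - t • y - cross3 (x - y) b = 0 := by
    rw [cross3_sub_left]
    have : (a - s • x + cross3 x b) - (a - t • y + cross3 y b) = 0 := by rw [Hx, Hy]; abel
    linear_combination (norm := module) - this
  have hinner : (inner ℝ (s • x - t • y - cross3 (x - y) b) (x - y) : ℝ) = 0 := by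
    rw [hsub, inner_zero_left]
  have hc : (inner ℝ (cross3 (x - y) b) (x - y) : ℝ) = 0 := inner_cross3_left _ _
  have hxx : (inner ℝ x x : ℝ) = 1 := by
    rw [real_inner_self_eq_norm_mul_norm, hx]; norm_num
  have hyy : (inner ℝ y y : ℝ) = 1 := by
    rw [real_inner_self_eq_norm_mul_norm, hy]; norm_num
  rw [inner_sub_left, inner_sub_left, inner_sub_right, inner_sub_right, hc,
    real_inner_smul_left, real_inner_smul_left, real_inner_smul_left, real_inner_smul_left,
    hxx] at hinner
  have hyx : (inner ℝ y x : ℝ) = (inner ℝ x y : ℝ) := real_inner_comm x y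
  rw [hyx, hyy] at hinner
  have hlt : (inner ℝ x y : ℝ) < 1 := inner_lt_one hx hy hxy
  have : (s + t) * (1 - (inner ℝ x y : ℝ)) = 0 := by ring_nf; ring_nf at hinner; linarith
  have h2 : s + t = 0 := by
    rcases mul_eq_zero.mp this with h | h
    · exact h
    · linarith
  linarith

lemma three_point (hx : ‖x‖ = 1) (hy : ‖y‖ = 1) (hz : ‖z‖ = 1)
    (hxy : x ≠ y) (hyz : y ≠ z) (hxz : x ≠ z)
    (Hx : a - (inner ℝ x a : ℝ) • x + cross3 x b = 0)
    (Hy : a - (inner ℝ y a : ℝ) • y + cross3 y b = 0)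
    (Hz : a - (inner ℝ z a : ℝ) • z + cross3 z b = 0) :
    a = 0 ∧ b = 0 := by
  have pxy := pair_step hx hy Hx Hy hxy
  have pyz := pair_step hy hz Hy Hz hyz
  have pxz := pair_step hx hz Hx Hz hxz
  have hsx : (inner ℝ x a : ℝ) = 0 := by linarith
  have hsy : (inner ℝ y a : ℝ) = 0 := by linarith
  have hsz : (inner ℝ z a : ℝ) = 0 := by linarith
  rw [hsx, zero_smul, sub_zero] at Hx
  rw [hsy, zero_smul, sub_zero] at Hy
  rw [hsz, zero_smul, sub_zero] at Hz
  have hb : b = 0 := by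
    by_contra hbne
    have hbb : (inner ℝ b b : ℝ) ≠ 0 := by
      rw [real_inner_self_eq_norm_mul_norm]
      have : 0 < ‖b‖ := norm_pos_iff.mpr hbne
      positivity
    have e1 : cross3 (x - y) b = 0 := by
      rw [cross3_sub_left]
      have : cross3 x b = -a := by linear_combination (norm := module) Hx
      have h2 : cross3 y b = -a := by linear_combination (norm := module) Hy
      rw [this, h2]; abel
    have e2 : cross3 (x - z) b = 0 := by
      rw [cross3_sub_left]
      have : cross3 x b = -a := by linear_combination (norm := module) Hx
      have h2 : cross3 z b = -a := by linear_combination (norm := module) Hz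
      rw [this, h2]; abel
    have p1 := cross3_parallel e1
    have p2 := cross3_parallel e2
    set B : ℝ := (inner ℝ b b : ℝ)
    set s : ℝ := (inner ℝ (x - y) b : ℝ)
    set t : ℝ := (inner ℝ (x - z) b : ℝ)
    have hxy' : x - y = (s / B) • b := by
      have : (B⁻¹ * B) • (x - y) = (B⁻¹ * s) • b := by
        rw [mul_smul, mul_smul, p1]
      rw [inv_mul_cancel₀ hbb, one_smul] at this
      rw [this, div_eq_inv_mul]
    have hxz' : x - z = (t / B) • b := by
      have : (B⁻¹ * B) • (x - z) = (B⁻¹ * t) • b := by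
        rw [mul_smul, mul_smul, p2]
      rw [inv_mul_cancel₀ hbb, one_smul] at this
      rw [this, div_eq_inv_mul]
    set s' : ℝ := s / B
    set t' : ℝ := t / B
    have hs'ne : s' ≠ 0 := by
      intro h0
      rw [h0, zero_smul, sub_eq_zero] at hxy'
      exact hxy hxy'
    have ht'ne : t' ≠ 0 := by
      intro h0
      rw [h0, zero_smul, sub_eq_zero] at hxz'
      exact hxz hxz'
    have hst : s' ≠ t' := by
      intro h0
      apply hyz
      have hv : x - y = x - z := by rw [hxy', hxz', h0]
      linear_combination (norm := module) - hv
    have ny : (1:ℝ) = 1 - 2 * s' * (inner ℝ x b : ℝ) + s' ^ 2 * ‖b‖ ^ 2 := by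
      have hyv : y = x - s' • b := by rw [← hxy']; abel
      have : ‖y‖ ^ 2 = ‖x‖ ^ 2 - 2 * (inner ℝ x (s' • b) : ℝ) + ‖s' • b‖ ^ 2 := by
        rw [hyv]; exact norm_sub_sq_real x (s' • b)
      rw [hx, hy, real_inner_smul_right, norm_smul] at this
      simp only [Real.norm_eq_abs] at this
      rw [mul_pow, sq_abs] at this
      rw [one_pow] at this
      linarith
    have nz : (1:ℝ) = 1 - 2 * t' * (inner ℝ x b : ℝ) + t' ^ 2 * ‖b‖ ^ 2 := by
      have hzv : z = x - t' • b := by rw [← hxz']; abel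
      have : ‖z‖ ^ 2 = ‖x‖ ^ 2 - 2 * (inner ℝ x (t' • b) : ℝ) + ‖t' • b‖ ^ 2 := by
        rw [hzv]; exact norm_sub_sq_real x (t' • b)
      rw [hx, hz, real_inner_smul_right, norm_smul] at this
      simp only [Real.norm_eq_abs] at this
      rw [mul_pow, sq_abs] at this
      rw [one_pow] at this
      linarith
    have hbn : ‖b‖ ^ 2 ≠ 0 := by
      simpa using norm_ne_zero_iff.mpr hbne
    have hs : s' * ‖b‖ ^ 2 = 2 * (inner ℝ x b : ℝ) := by
      have : s' * (s' * ‖b‖ ^ 2 - 2 * (inner ℝ x b : ℝ)) = 0 := by linear_combination - ny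
      rcases mul_eq_zero.mp this with h | h
      · exact absurd h hs'ne
      · linarith
    have ht : t' * ‖b‖ ^ 2 = 2 * (inner ℝ x b : ℝ) := by
      have : t' * (t' * ‖b‖ ^ 2 - 2 * (inner ℝ x b : ℝ)) = 0 := by linear_combination - nz
      rcases mul_eq_zero.mp this with h | h
      · exact absurd h ht'ne
      · linarith
    apply hst
    have : (s' - t') * ‖b‖ ^ 2 = 0 := by linarith
    rcases mul_eq_zero.mp this with h | h
    · linarith
    · exact absurd h hbn
  refine ⟨?_, hb⟩
  rw [hb, cross3_zero_right, add_zero] at Hx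
  exact Hx

end ThreePoint

lemma exists_tangent_unit (c : E3) (hc : ‖c‖ = 1) :
    ∃ v : E3, ‖v‖ = 1 ∧ (inner ℝ c v : ℝ) = 0 := by
  have hcc : (inner ℝ c c : ℝ) = 1 := by
    rw [real_inner_self_eq_norm_mul_norm, hc]; norm_num
  have hw : ∃ m : Fin 3, stdBasis m - (inner ℝ c (stdBasis m) : ℝ) • c ≠ 0 := by
    by_contra hall
    push_neg at hall
    have key : ∀ m : Fin 3, (c m) ^ 2 = 1 := by
      intro m
      have h := hall m
      rw [sub_eq_zero] at h
      have h2 : stdBasis m m = (inner ℝ c (stdBasis m) • c) m := by rw [← h]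
      have hsingle : stdBasis m m = 1 := by simp [stdBasis]
      have hinner : (inner ℝ c (stdBasis m) : ℝ) = c m := by
        simp [stdBasis, EuclideanSpace.inner_single_right]
      rw [hinner] at h2
      rw [hsingle] at h2
      have : (1:ℝ) = c m * c m := by
        simpa [PiLp.smul_apply, smul_eq_mul] using h2
      nlinarith
    have hsum : (c 0) ^ 2 + (c 1) ^ 2 + (c 2) ^ 2 = 1 := by
      have := hcc
      rw [inner3] at this
      nlinarith
    have := key 0; have := key 1; have := key 2
    linarith
  obtain ⟨m, hm⟩ := hw
  set w : E3 := stdBasis m - (inner ℝ c (stdBasis m) : ℝ) • c with hwdef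
  have hcw : (inner ℝ c w : ℝ) = 0 := by
    rw [hwdef, inner_sub_right, real_inner_smul_right, hcc]
    ring
  refine ⟨‖w‖⁻¹ • w, ?_, ?_⟩
  · rw [norm_smul]
    simp only [norm_inv, norm_norm]
    field_simp [norm_ne_zero_iff.mpr hm]
  · rw [real_inner_smul_right, hcw]; ring

lemma exists_three_points (c : E3) (hc : ‖c‖ = 1) {ε : ℝ} (hε : 0 < ε) :
    ∃ x y z : E3, ‖x‖ = 1 ∧ ‖y‖ = 1 ∧ ‖z‖ = 1 ∧ x ≠ y ∧ y ≠ z ∧ x ≠ z ∧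
      ‖x - c‖ ≤ ε ∧ ‖y - c‖ ≤ ε ∧ ‖z - c‖ ≤ ε := by
  obtain ⟨v, hv1, hcv⟩ := exists_tangent_unit c hc
  set δ : ℝ := min ε 1 with hδdef
  have hδpos : 0 < δ := lt_min hε one_pos
  have hδ1 : δ ≤ 1 := min_le_right _ _
  have hδε : δ ≤ ε := min_le_left _ _
  set pt : ℝ → E3 := fun θ => Real.cos θ • c + Real.sin θ • v with hptdef
  have hvv : (inner ℝ v v : ℝ) = 1 := by
    rw [real_inner_self_eq_norm_mul_norm, hv1]; norm_num
  have hnorm : ∀ θ, ‖pt θ‖ = 1 := by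
    intro θ
    have hx : ‖pt θ‖ ^ 2 = 1 := by
      rw [hptdef]
      have := norm_add_sq_real (Real.cos θ • c) (Real.sin θ • v)
      rw [real_inner_smul_left, real_inner_smul_right, hcv, norm_smul, norm_smul] at this
      simp only [Real.norm_eq_abs] at this
      rw [mul_pow, mul_pow, sq_abs, sq_abs, hc, hv1] at this
      simp only at this ⊢
      rw [this]
      have := Real.sin_sq_add_cos_sq θ
      nlinarith
    have h0 : 0 ≤ ‖pt θ‖ := norm_nonneg _
    nlinarith
  have hdist : ∀ θ, 0 ≤ θ → θ ≤ ε → ‖pt θ - c‖ ≤ ε := by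
    intro θ h0 hθε
    have hsq : ‖pt θ - c‖ ^ 2 = 2 - 2 * Real.cos θ := by
      have hrw : pt θ - c = (Real.cos θ - 1) • c + Real.sin θ • v := by
        rw [hptdef]; simp only; module
      rw [hrw]
      have := norm_add_sq_real ((Real.cos θ - 1) • c) (Real.sin θ • v)
      rw [real_inner_smul_left, real_inner_smul_right, hcv, norm_smul, norm_smul] at this
      simp only [Real.norm_eq_abs] at this
      rw [mul_pow, mul_pow, sq_abs, sq_abs, hc, hv1] at this
      rw [this]
      have := Real.sin_sq_add_cos_sq θ
      nlinarith
    have hcosb := Real.one_sub_sq_div_two_le_cos (x := θ)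
    have : ‖pt θ - c‖ ^ 2 ≤ ε ^ 2 := by nlinarith
    nlinarith [norm_nonneg (pt θ - c)]
  have hinj : ∀ θ₁ θ₂, 0 ≤ θ₁ → θ₂ ≤ 1 → θ₁ < θ₂ → pt θ₁ ≠ pt θ₂ := by
    intro θ₁ θ₂ h1 h2 hlt heq
    have hs : Real.sin θ₁ < Real.sin θ₂ := by
      apply Real.sin_lt_sin_of_lt_of_le_pi_div_two (by linarith [Real.pi_gt_three]) ?_ hlt
      linarith [Real.pi_gt_three]
    have e1 : (inner ℝ v (pt θ₁) : ℝ) = Real.sin θ₁ := by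
      rw [hptdef]
      simp only
      rw [inner_add_right, real_inner_smul_right, real_inner_smul_right, hvv,
        show (inner ℝ v c : ℝ) = 0 by rw [real_inner_comm]; exact hcv]
      ring
    have e2 : (inner ℝ v (pt θ₂) : ℝ) = Real.sin θ₂ := by
      rw [hptdef]
      simp only
      rw [inner_add_right, real_inner_smul_right, real_inner_smul_right, hvv,
        show (inner ℝ v c : ℝ) = 0 by rw [real_inner_comm]; exact hcv]
      ring
    rw [heq, e2] at e1
    linarith
  refine ⟨pt (δ/3), pt (δ/2), pt δ, hnorm _, hnorm _, hnorm _,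
    hinj _ _ (by linarith) (by linarith) (by linarith),
    hinj _ _ (by linarith) (by linarith) (by linarith),
    hinj _ _ (by linarith) (by linarith) (by linarith),
    hdist _ (by linarith) (by linarith), hdist _ (by linarith) (by linarith),
    hdist _ (by linarith) (by linarith)⟩

instance : IsFiniteMeasure sphereMeasure := by
  unfold sphereMeasure; infer_instance

instance sphereMeasure_openPos : sphereMeasure.IsOpenPosMeasure := by
  constructor
  intro V hV hne
  obtain ⟨W, hWopen, hWV⟩ := isOpen_induced_iff.mp hV
  rw [sphereMeasure, Measure.toSphere_apply' _ hV.measurableSet]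
  have hdim : (Module.finrank ℝ E3 : ENNReal) ≠ 0 := by simp
  refine mul_ne_zero hdim ?_
  set g : E3 → E3 := fun y => ‖y‖⁻¹ • y with hgdef
  set D : Set E3 := {y : E3 | y ≠ 0} with hDdef
  have hDopen : IsOpen D := isOpen_compl_singleton
  have hgcont : ContinuousOn g D := by
    have hs : ContinuousOn (fun y : E3 => ‖y‖⁻¹) D :=
      (continuous_norm.continuousOn).inv₀ fun y hy => norm_ne_zero_iff.mpr hy
    exact hs.smul continuousOn_id
  set O : Set E3 := ball 0 1 ∩ (D ∩ g ⁻¹' W) with hOdef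
  have hOopen : IsOpen O := isOpen_ball.inter (hgcont.isOpen_inter_preimage hDopen hWopen)
  have hOne : O.Nonempty := by
    obtain ⟨x₀, hx₀⟩ := hne
    have hx₀n : ‖(x₀ : E3)‖ = 1 := by
      have := x₀.2
      rwa [mem_sphere_zero_iff_norm] at this
    refine ⟨(2⁻¹ : ℝ) • (x₀ : E3), ?_, ?_, ?_⟩
    · rw [mem_ball_zero_iff, norm_smul, hx₀n]
      norm_num
    · simp only [hDdef, mem_setOf_eq]
      intro h
      apply_fun (‖·‖) at h
      rw [norm_smul, hx₀n, norm_zero] at h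
      norm_num at h
    · have : g ((2⁻¹ : ℝ) • (x₀ : E3)) = (x₀ : E3) := by
        rw [hgdef]
        simp only
        rw [norm_smul, hx₀n, smul_smul]
        norm_num
      simp only [mem_preimage, this]
      have : x₀ ∈ (Subtype.val ⁻¹' W : Set UnitSphere) := by rw [hWV]; exact hx₀
      exact this
  have hsub : O ⊆ Ioo (0:ℝ) 1 • (Subtype.val '' V) := by
    rintro y ⟨hball, hD, hgW⟩
    have hy0 : y ≠ 0 := hD
    have hny : 0 < ‖y‖ := norm_pos_iff.mpr hy0
    have hny1 : ‖y‖ < 1 := by rwa [mem_ball_zero_iff] at hball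
    have hgu : ‖g y‖ = 1 := by
      rw [hgdef]; simp only
      rw [norm_smul, norm_inv, norm_norm]
      field_simp
    refine ⟨‖y‖, ⟨hny, hny1⟩, g y, ?_, ?_⟩
    · refine ⟨⟨g y, mem_sphere_zero_iff_norm.mpr hgu⟩, ?_, rfl⟩
      have : (⟨g y, mem_sphere_zero_iff_norm.mpr hgu⟩ : UnitSphere) ∈
          (Subtype.val ⁻¹' W : Set UnitSphere) := hgW
      rwa [hWV] at this
    · rw [hgdef]
      simp only
      rw [smul_smul]
      field_simp
      exact one_smul _ _
  have hpos : 0 < volume O := hOopen.measure_pos volume hOne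
  intro h0
  exact lt_irrefl 0 (lt_of_lt_of_le hpos (le_of_le_of_eq (measure_mono hsub) h0))

end SphereAux

namespace SphereAux
open Set Real
open scoped Pointwise

/-- combined field family -/
def Afield : Fin 3 ⊕ Fin 3 → (EuclideanSpace ℝ (Fin 3)) → (EuclideanSpace ℝ (Fin 3)) :=
  Sum.elim Efield Hfield

def crossLM (e : EuclideanSpace ℝ (Fin 3)) :
    (EuclideanSpace ℝ (Fin 3)) →ₗ[ℝ] (EuclideanSpace ℝ (Fin 3)) where
  toFun := fun y => cross3 y e
  map_add' := fun x y => cross3_add_left x y e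
  map_smul' := fun r x => cross3_smul_left r x e

lemma contDiff_Afield (j : Fin 3 ⊕ Fin 3) : ContDiff ℝ ((⊤ : ℕ∞) : WithTop ℕ∞) (Afield j) := by
  cases j with
  | inl m =>
    have hinner : ContDiff ℝ ((⊤ : ℕ∞) : WithTop ℕ∞) (fun x : EuclideanSpace ℝ (Fin 3) =>
        (inner ℝ x (stdBasis m) : ℝ)) := by
      have : (fun x : EuclideanSpace ℝ (Fin 3) => (inner ℝ x (stdBasis m) : ℝ))
          = fun x => (innerSL ℝ (stdBasis m)) x := by
        funext x
        simp only [innerSL_apply_apply]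
        exact real_inner_comm (stdBasis m) x
      rw [this]
      exact (innerSL ℝ (stdBasis m)).contDiff
    have h2 : ContDiff ℝ ((⊤ : ℕ∞) : WithTop ℕ∞) (fun x : EuclideanSpace ℝ (Fin 3) =>
        (inner ℝ x (stdBasis m) : ℝ) • x) := hinner.smul contDiff_id
    exact contDiff_const.sub h2
  | inr m =>
    have : Afield (Sum.inr m) = fun y => (LinearMap.toContinuousLinearMap (crossLM (stdBasis m))) y := by
      funext y; rfl
    rw [this]
    exact (LinearMap.toContinuousLinearMap (crossLM (stdBasis m))).contDiff

lemma tangent_Afield (j : Fin 3 ⊕ Fin 3) (y : EuclideanSpace ℝ (Fin 3)) (hy : ‖y‖ = 1) :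
    (inner ℝ (Afield j y) y : ℝ) = 0 := by
  have hyy : (inner ℝ y y : ℝ) = 1 := by
    rw [real_inner_self_eq_norm_mul_norm, hy]; norm_num
  cases j with
  | inl m =>
    show (inner ℝ (stdBasis m - (inner ℝ y (stdBasis m) : ℝ) • y) y : ℝ) = 0
    rw [inner_sub_left, real_inner_smul_left, hyy,
      real_inner_comm (stdBasis m) y]
    ring
  | inr m => exact inner_cross3_left y (stdBasis m)

lemma norm_Afield_le (j : Fin 3 ⊕ Fin 3) (y : EuclideanSpace ℝ (Fin 3)) (hy : ‖y‖ = 1) :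
    ‖Afield j y‖ ≤ 4 := by
  have hstd : ∀ m : Fin 3, ‖stdBasis m‖ = 1 := by
    intro m; rw [stdBasis, EuclideanSpace.norm_single, norm_one]
  cases j with
  | inl m =>
    show ‖stdBasis m - (inner ℝ y (stdBasis m) : ℝ) • y‖ ≤ 4
    calc ‖stdBasis m - (inner ℝ y (stdBasis m) : ℝ) • y‖
        ≤ ‖stdBasis m‖ + ‖(inner ℝ y (stdBasis m) : ℝ) • y‖ := norm_sub_le _ _
      _ = 1 + |(inner ℝ y (stdBasis m) : ℝ)| * ‖y‖ := by
          rw [hstd m, norm_smul, Real.norm_eq_abs]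
      _ ≤ 1 + (‖y‖ * ‖stdBasis m‖) * ‖y‖ := by
          have := abs_real_inner_le_norm y (stdBasis m)
          have h0 : (0:ℝ) ≤ ‖y‖ := norm_nonneg _
          nlinarith
      _ ≤ 4 := by rw [hy, hstd m]; norm_num
  | inr m =>
    show ‖cross3 y (stdBasis m)‖ ≤ 4
    set e := stdBasis m
    have hyc : ∀ i, |y i| ≤ 1 := fun i => hy ▸ comp_abs_le_norm y i
    have hec : ∀ i, |e i| ≤ 1 := fun i => (hstd m) ▸ comp_abs_le_norm e i
    have hcomp : ∀ i : Fin 3, ‖cross3 y e i‖ ^ 2 ≤ 4 := by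
      intro i
      rw [Real.norm_eq_abs, sq_abs]
      have key : ∀ u v w t : ℝ, |u| ≤ 1 → |v| ≤ 1 → |w| ≤ 1 → |t| ≤ 1 →
          (u * v - w * t) ^ 2 ≤ 4 := by
        intro u v w t hu hv hw ht
        have h1 : |u * v| ≤ 1 := by rw [abs_mul]; nlinarith [abs_nonneg u, abs_nonneg v]
        have h2 : |w * t| ≤ 1 := by rw [abs_mul]; nlinarith [abs_nonneg w, abs_nonneg t]
        have := abs_le.mp h1
        have := abs_le.mp h2
        nlinarith
      fin_cases i
      · rw [show cross3 y e ⟨0, by norm_num⟩ = cross3 y e 0 from rfl, cross3_apply0]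
        exact key _ _ _ _ (hyc 1) (hec 2) (hyc 2) (hec 1)
      · rw [show cross3 y e ⟨1, by norm_num⟩ = cross3 y e 1 from rfl, cross3_apply1]
        exact key _ _ _ _ (hyc 2) (hec 0) (hyc 0) (hec 2)
      · rw [show cross3 y e ⟨2, by norm_num⟩ = cross3 y e 2 from rfl, cross3_apply2]
        exact key _ _ _ _ (hyc 0) (hec 1) (hyc 1) (hec 0)
    rw [EuclideanSpace.norm_eq]
    have hsum : ∑ i : Fin 3, ‖cross3 y e i‖ ^ 2 ≤ 16 := by
      rw [Fin.sum_univ_three]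
      have := hcomp 0; have := hcomp 1; have := hcomp 2
      linarith
    calc √(∑ i : Fin 3, ‖cross3 y e i‖ ^ 2) ≤ √16 := Real.sqrt_le_sqrt hsum
      _ = 4 := by
          rw [show (16:ℝ) = 4 ^ 2 by norm_num, Real.sqrt_sq (by norm_num : (0:ℝ) ≤ 4)]

def aVec (c : Fin 3 ⊕ Fin 3 → ℝ) : EuclideanSpace ℝ (Fin 3) :=
  ∑ m : Fin 3, c (Sum.inl m) • stdBasis m
def bVec (c : Fin 3 ⊕ Fin 3 → ℝ) : EuclideanSpace ℝ (Fin 3) :=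
  ∑ m : Fin 3, c (Sum.inr m) • stdBasis m

lemma sum_smul_stdBasis_apply (d : Fin 3 → ℝ) (i : Fin 3) :
    (∑ m : Fin 3, d m • stdBasis m : EuclideanSpace ℝ (Fin 3)) i = d i := by
  rw [Fin.sum_univ_three]
  simp only [PiLp.add_apply, PiLp.smul_apply, smul_eq_mul, stdBasis,
    EuclideanSpace.single_apply]
  fin_cases i <;> simp [Fin.ext_iff]

lemma decomposition (c : Fin 3 ⊕ Fin 3 → ℝ) (y : EuclideanSpace ℝ (Fin 3)) :
    ∑ j : Fin 3 ⊕ Fin 3, c j • Afield j y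
      = aVec c - (inner ℝ y (aVec c) : ℝ) • y + cross3 y (bVec c) := by
  rw [Fintype.sum_sum_type]
  have h1 : ∑ m : Fin 3, c (Sum.inl m) • Afield (Sum.inl m) y
      = aVec c - (inner ℝ y (aVec c) : ℝ) • y := by
    have hinner : (inner ℝ y (aVec c) : ℝ)
        = ∑ m : Fin 3, c (Sum.inl m) * (inner ℝ y (stdBasis m) : ℝ) := by
      rw [aVec, inner_sum]
      congr 1
      funext m
      rw [real_inner_smul_right]
    rw [hinner, aVec]
    have : ∀ m : Fin 3, c (Sum.inl m) • Afield (Sum.inl m) y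
        = c (Sum.inl m) • stdBasis m
          - (c (Sum.inl m) * (inner ℝ y (stdBasis m) : ℝ)) • y := by
      intro m
      show c (Sum.inl m) • (stdBasis m - (inner ℝ y (stdBasis m) : ℝ) • y) = _
      rw [smul_sub, smul_smul]
    rw [Finset.sum_congr rfl fun m _ => this m, Finset.sum_sub_distrib, ← Finset.sum_smul]
  have h2 : ∑ m : Fin 3, c (Sum.inr m) • Afield (Sum.inr m) y = cross3 y (bVec c) := by
    have : ∀ m : Fin 3, c (Sum.inr m) • Afield (Sum.inr m) y
        = cross3 y (c (Sum.inr m) • stdBasis m) := by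
      intro m
      show c (Sum.inr m) • cross3 y (stdBasis m) = _
      rw [cross3_smul_right]
    rw [Finset.sum_congr rfl fun m _ => this m, bVec, Fin.sum_univ_three, Fin.sum_univ_three,
      cross3_add_right, cross3_add_right]
  rw [h1, h2]

end SphereAux

open SphereAux

/-- (Observation (2) of §6.2: localized tangent vector fields with
prescribed electric and magnetic mode-1 moments.) For every nonempty open subset
`U ⊆ S²` there exist a constant `C > 0` and a linear map `Ψ : ℝ⁶ → (S² → ℝ³)` such
that for every `(α, β) ∈ ℝ³ × ℝ³` the field `X := Ψ (α, β)` is a smooth tangent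
vector field on `S²`, has support contained in `U`, satisfies
`∫ ⟨X, Eₘ⟩ dσ = αₘ` and `∫ ⟨X, Hₘ⟩ dσ = βₘ` for `m = 1, 2, 3`, and is bounded by
`sup ‖X‖ ≤ C · maxₘ (|αₘ|, |βₘ|)`. -/
theorem localized_tangent_field_with_prescribed_mode_one_moments
    (U : Set UnitSphere) (hUopen : IsOpen U) (hUne : U.Nonempty) :
    ∃ (C : ℝ)
      (Ψ : ((Fin 3 → ℝ) × (Fin 3 → ℝ)) →ₗ[ℝ]
            (UnitSphere → EuclideanSpace ℝ (Fin 3))), 0 < C ∧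
      ∀ p : (Fin 3 → ℝ) × (Fin 3 → ℝ),
        -- `X := Ψ p` is smooth on the sphere,
        ContMDiff (𝓡 2) 𝓘(ℝ, EuclideanSpace ℝ (Fin 3)) (⊤ : ℕ∞) (Ψ p) ∧
        -- is tangent to the sphere,
        (∀ x : UnitSphere, (inner ℝ (Ψ p x) (x : EuclideanSpace ℝ (Fin 3)) : ℝ) = 0) ∧
        -- has (closed) support contained in `U`,
        tsupport (Ψ p) ⊆ U ∧
        -- has prescribed electric mode-1 moments `αₘ`,
        (∀ m : Fin 3,
          (∫ x, (inner ℝ (Ψ p x) (Efield m (x : EuclideanSpace ℝ (Fin 3))) : ℝ)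
            ∂sphereMeasure) = p.1 m) ∧
        -- has prescribed magnetic mode-1 moments `βₘ`,
        (∀ m : Fin 3,
          (∫ x, (inner ℝ (Ψ p x) (Hfield m (x : EuclideanSpace ℝ (Fin 3))) : ℝ)
            ∂sphereMeasure) = p.2 m) ∧
        -- and satisfies the sup bound (`‖p‖` is the max of `|α₁|, …, |β₃|`).
        ∀ x : UnitSphere, ‖Ψ p x‖ ≤ C * ‖p‖ := by
  classical
  obtain ⟨x₀, hx₀U⟩ := hUne
  obtain ⟨W, hWopen, hWU⟩ := isOpen_induced_iff.mp hUopen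
  have hx₀n : ‖(x₀ : EuclideanSpace ℝ (Fin 3))‖ = 1 := mem_sphere_zero_iff_norm.mp x₀.2
  have hx₀W : (x₀ : EuclideanSpace ℝ (Fin 3)) ∈ W := by
    rw [← hWU] at hx₀U; exact hx₀U
  obtain ⟨r, hrpos, hball⟩ := Metric.isOpen_iff.mp hWopen _ hx₀W
  set bump : ContDiffBump (x₀ : EuclideanSpace ℝ (Fin 3)) :=
    ⟨r/2, 3*r/4, by positivity, by linarith⟩ with hbump
  set φ : UnitSphere → ℝ := fun x => bump x with hφdef
  have hφcont : Continuous φ := bump.continuous.comp continuous_subtype_val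
  have hAcont : ∀ j, Continuous fun x : UnitSphere =>
      Afield j (x : EuclideanSpace ℝ (Fin 3)) :=
    fun j => ((contDiff_Afield j).continuous).comp continuous_subtype_val
  have hInt : ∀ f : UnitSphere → ℝ, Continuous f → Integrable f sphereMeasure :=
    fun f hf => hf.integrable_of_hasCompactSupport (HasCompactSupport.of_compactSpace f)
  set G : Matrix (Fin 3 ⊕ Fin 3) (Fin 3 ⊕ Fin 3) ℝ := fun i j =>
    ∫ x, φ x * (inner ℝ (Afield j (x : EuclideanSpace ℝ (Fin 3)))
      (Afield i (x : EuclideanSpace ℝ (Fin 3))) : ℝ) ∂sphereMeasure with hGdef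
  have hGint : ∀ i j, Integrable (fun x : UnitSphere =>
      φ x * (inner ℝ (Afield j (x : EuclideanSpace ℝ (Fin 3)))
        (Afield i (x : EuclideanSpace ℝ (Fin 3))) : ℝ)) sphereMeasure :=
    fun i j => hInt _ (hφcont.mul ((hAcont j).inner (hAcont i)))
  -- the moment computation
  have momint : ∀ (c : Fin 3 ⊕ Fin 3 → ℝ) (i : Fin 3 ⊕ Fin 3),
      (∫ x, (inner ℝ (φ x • ∑ j, c j • Afield j (x : EuclideanSpace ℝ (Fin 3)))
        (Afield i (x : EuclideanSpace ℝ (Fin 3))) : ℝ) ∂sphereMeasure)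
        = G.mulVec c i := by
    intro c i
    have hpt : ∀ x : UnitSphere,
        (inner ℝ (φ x • ∑ j, c j • Afield j (x : EuclideanSpace ℝ (Fin 3)))
          (Afield i (x : EuclideanSpace ℝ (Fin 3))) : ℝ)
          = ∑ j, c j * (φ x * (inner ℝ (Afield j (x : EuclideanSpace ℝ (Fin 3)))
            (Afield i (x : EuclideanSpace ℝ (Fin 3))) : ℝ)) := by
      intro x
      rw [real_inner_smul_left, sum_inner, Finset.mul_sum]
      congr 1
      funext j
      rw [real_inner_smul_left]
      ring
    simp only [hpt]
    rw [integral_finset_sum _ (fun j _ => (hGint i j).const_mul (c j))]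
    have : ∀ j, (∫ x, c j * (φ x * (inner ℝ (Afield j (x : EuclideanSpace ℝ (Fin 3)))
        (Afield i (x : EuclideanSpace ℝ (Fin 3))) : ℝ)) ∂sphereMeasure)
        = G i j * c j := by
      intro j
      rw [integral_const_mul]
      rw [mul_comm]
    simp only [this, Matrix.mulVec, dotProduct]
  -- injectivity of the Gram matrix
  have hinj : Function.Injective (Matrix.mulVecLin G) := by
    apply (injective_iff_map_eq_zero (Matrix.mulVecLin G)).mpr
    intro c hc
    have hc' : G.mulVec c = 0 := hc
    set Yc : UnitSphere → EuclideanSpace ℝ (Fin 3) :=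
      fun x => ∑ j, c j • Afield j (x : EuclideanSpace ℝ (Fin 3)) with hYcdef
    have hYccont : Continuous Yc :=
      continuous_finset_sum _ fun j _ => (hAcont j).const_smul (c j)
    set f : UnitSphere → ℝ := fun x => φ x * (inner ℝ (Yc x) (Yc x) : ℝ) with hfdef
    have hfcont : Continuous f := hφcont.mul (hYccont.inner hYccont)
    have hpt2 : ∀ x : UnitSphere, f x
        = ∑ i, c i * (inner ℝ (φ x • Yc x) (Afield i (x : EuclideanSpace ℝ (Fin 3))) : ℝ) := by
      intro x
      have h1 : f x = (inner ℝ (φ x • Yc x) (Yc x) : ℝ) := by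
        rw [real_inner_smul_left]
      rw [h1]
      conv_lhs => rw [hYcdef]
      simp only
      rw [inner_sum]
      congr 1
      funext i
      rw [real_inner_smul_right]
    have hintf : Integrable f sphereMeasure := hInt f hfcont
    have hint0 : (∫ x, f x ∂sphereMeasure) = 0 := by
      simp only [hpt2]
      rw [integral_finset_sum _ (fun i _ => by
        apply Integrable.const_mul
        apply hInt
        exact ((hφcont.smul hYccont).inner (hAcont i)))]
      have hterm : ∀ i, (∫ x, c i * (inner ℝ (φ x • Yc x)
          (Afield i (x : EuclideanSpace ℝ (Fin 3))) : ℝ) ∂sphereMeasure) = 0 := by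
        intro i
        rw [integral_const_mul]
        have : (∫ x, (inner ℝ (φ x • Yc x)
            (Afield i (x : EuclideanSpace ℝ (Fin 3))) : ℝ) ∂sphereMeasure) = G.mulVec c i :=
          momint c i
        rw [this, hc']
        simp
      simp only [hterm]
      simp
    have hfnn : (0 : UnitSphere → ℝ) ≤ f := by
      intro x
      exact mul_nonneg bump.nonneg real_inner_self_nonneg
    have hae := (integral_eq_zero_iff_of_nonneg hfnn hintf).mp hint0
    have hzero : f = 0 :=
      (hfcont.ae_eq_iff_eq sphereMeasure continuous_const).mp hae
    -- evaluate at three nearby points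
    obtain ⟨xx, yy, zz, h1x, h1y, h1z, hxy, hyz, hxz, hdx, hdy, hdz⟩ :=
      exists_three_points (x₀ : EuclideanSpace ℝ (Fin 3)) hx₀n (ε := r/2) (by positivity)
    have hzeroat : ∀ (w : EuclideanSpace ℝ (Fin 3)), ‖w‖ = 1 →
        ‖w - (x₀ : EuclideanSpace ℝ (Fin 3))‖ ≤ r/2 →
        aVec c - (inner ℝ w (aVec c) : ℝ) • w + cross3 w (bVec c) = 0 := by
      intro w hw hclose
      have hwmem : w ∈ Metric.closedBall (x₀ : EuclideanSpace ℝ (Fin 3)) (r/2) := by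
        rw [Metric.mem_closedBall, dist_eq_norm]
        exact hclose
      have hφ1 : bump w = 1 := bump.one_of_mem_closedBall hwmem
      set wp : UnitSphere := ⟨w, mem_sphere_zero_iff_norm.mpr hw⟩ with hwp
      have hfw : f wp = 0 := by rw [hzero]; rfl
      have hφwp : φ wp = 1 := hφ1
      rw [hfdef] at hfw
      simp only at hfw
      rw [hφwp, one_mul] at hfw
      have hY0 : Yc wp = 0 := by
        have hn : ‖Yc wp‖ * ‖Yc wp‖ = 0 := by
          rw [← real_inner_self_eq_norm_mul_norm, hfw]
        have := mul_self_eq_zero.mp hn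
        exact norm_eq_zero.mp this
      have : (∑ j, c j • Afield j w) = 0 := hY0
      rw [decomposition c w] at this
      exact this
    obtain ⟨ha, hb⟩ := three_point h1x h1y h1z hxy hyz hxz
      (hzeroat xx h1x hdx) (hzeroat yy h1y hdy) (hzeroat zz h1z hdz)
    funext i
    cases i with
    | inl m =>
      have : aVec c m = (0 : EuclideanSpace ℝ (Fin 3)) m := by rw [ha]
      rw [show aVec c m = c (Sum.inl m) from sum_smul_stdBasis_apply (fun m => c (Sum.inl m)) m] at this
      simpa using this
    | inr m =>
      have : bVec c m = (0 : EuclideanSpace ℝ (Fin 3)) m := by rw [hb]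
      rw [show bVec c m = c (Sum.inr m) from sum_smul_stdBasis_apply (fun m => c (Sum.inr m)) m] at this
      simpa using this
  have hsurj : Function.Surjective (Matrix.mulVecLin G) :=
    LinearMap.injective_iff_surjective.mp hinj
  set eqv : ((Fin 3 ⊕ Fin 3) → ℝ) ≃ₗ[ℝ] ((Fin 3 ⊕ Fin 3) → ℝ) :=
    LinearEquiv.ofBijective (Matrix.mulVecLin G) ⟨hinj, hsurj⟩ with heqv
  set vp : ((Fin 3 → ℝ) × (Fin 3 → ℝ)) →ₗ[ℝ] ((Fin 3 ⊕ Fin 3) → ℝ) :=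
    { toFun := fun p => Sum.elim p.1 p.2
      map_add' := by intro p q; funext i; cases i <;> rfl
      map_smul' := by intro rr p; funext i; cases i <;> rfl } with hvp
  set coefL : ((Fin 3 → ℝ) × (Fin 3 → ℝ)) →ₗ[ℝ] ((Fin 3 ⊕ Fin 3) → ℝ) :=
    eqv.symm.toLinearMap.comp vp with hcoefL
  set T : ((Fin 3 → ℝ) × (Fin 3 → ℝ)) →L[ℝ] ((Fin 3 ⊕ Fin 3) → ℝ) :=
    LinearMap.toContinuousLinearMap coefL with hT
  set K : ℝ := ‖T‖ with hK
  have hKnn : 0 ≤ K := norm_nonneg _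
  have hcoefbound : ∀ p j, |coefL p j| ≤ K * ‖p‖ := by
    intro p j
    have h1 : |coefL p j| = ‖(T p) j‖ := by rw [Real.norm_eq_abs]; rfl
    rw [h1]
    exact le_trans (norm_le_pi_norm (T p) j) (T.le_opNorm p)
  refine ⟨24 * (K + 1), ⟨⟨fun p => fun x => φ x • ∑ j, coefL p j •
      Afield j (x : EuclideanSpace ℝ (Fin 3)), ?_⟩, ?_⟩, by positivity, ?_⟩
  · intro p q
    funext x
    simp only [map_add, Pi.add_apply, add_smul, Finset.sum_add_distrib, smul_add]
  · intro rr p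
    funext x
    have hcs : ∀ j, (eqv.symm.toLinearMap.comp vp) (rr • p) j
        = rr * (eqv.symm.toLinearMap.comp vp) p j := by
      intro j
      have := (eqv.symm.toLinearMap.comp vp).map_smul rr p
      rw [this]
      rfl
    simp only [RingHom.id_apply, Pi.smul_apply, hcs, mul_smul]
    simp only [map_smul, Pi.smul_apply, smul_eq_mul, mul_smul, ← Finset.smul_sum]
    rw [smul_comm]
  intro p
  simp only [LinearMap.coe_mk, AddHom.coe_mk]
  set c : (Fin 3 ⊕ Fin 3) → ℝ := coefL p with hc
  have hmulvec : G.mulVec c = vp p := by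
    have h1 : G.mulVec c = eqv (eqv.symm (vp p)) := by
      rfl
    rw [h1, LinearEquiv.apply_symm_apply]
  refine ⟨?_, ?_, ?_, ?_, ?_, ?_⟩
  · -- smoothness
    have hsummand : ∀ j : Fin 3 ⊕ Fin 3, ContDiff ℝ ((⊤ : ℕ∞) : WithTop ℕ∞)
        (fun y : EuclideanSpace ℝ (Fin 3) => c j • Afield j y) :=
      fun j => (contDiff_Afield j).const_smul (c j)
    have hsum : ContDiff ℝ ((⊤ : ℕ∞) : WithTop ℕ∞)
        (fun y : EuclideanSpace ℝ (Fin 3) => ∑ j, c j • Afield j y) :=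
      ContDiff.sum fun j _ => hsummand j
    have hF : ContDiff ℝ ((⊤ : ℕ∞) : WithTop ℕ∞) (fun y : EuclideanSpace ℝ (Fin 3) =>
        (bump y : ℝ) • ∑ j, c j • Afield j y) := bump.contDiff.smul hsum
    have hcomp : ContMDiff (𝓡 2) 𝓘(ℝ, EuclideanSpace ℝ (Fin 3)) (⊤ : ℕ∞)
        ((fun y : EuclideanSpace ℝ (Fin 3) => (bump y : ℝ) • ∑ j, c j • Afield j y)
          ∘ (Subtype.val : UnitSphere → EuclideanSpace ℝ (Fin 3))) :=
      ContMDiff.comp (hF.contMDiff) contMDiff_coe_sphere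
    exact hcomp
  · -- tangency
    intro x
    have hx1 : ‖(x : EuclideanSpace ℝ (Fin 3))‖ = 1 := mem_sphere_zero_iff_norm.mp x.2
    show (inner ℝ (φ x • ∑ j, c j • Afield j (x : EuclideanSpace ℝ (Fin 3)))
      (x : EuclideanSpace ℝ (Fin 3)) : ℝ) = 0
    rw [real_inner_smul_left, sum_inner]
    rw [Finset.sum_eq_zero fun j _ => by
      rw [real_inner_smul_left, tangent_Afield j _ hx1, mul_zero]]
    rw [mul_zero]
  · -- support
    have hsupp : Function.support (fun x : UnitSphere => φ x • ∑ j, c j •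
        Afield j (x : EuclideanSpace ℝ (Fin 3)))
        ⊆ Subtype.val ⁻¹' (Metric.closedBall (x₀ : EuclideanSpace ℝ (Fin 3)) (3*r/4)) := by
      intro x hx
      have hφne : φ x ≠ 0 := by
        intro h0
        apply hx
        show φ x • _ = 0
        rw [h0, zero_smul]
      have : (x : EuclideanSpace ℝ (Fin 3)) ∈ Function.support (bump : EuclideanSpace ℝ (Fin 3) → ℝ) :=
        hφne
      rw [bump.support_eq] at this
      exact Metric.ball_subset_closedBall this
    have hclosed : IsClosed (Subtype.val ⁻¹'
        (Metric.closedBall (x₀ : EuclideanSpace ℝ (Fin 3)) (3*r/4)) : Set UnitSphere) :=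
      Metric.isClosed_closedBall.preimage continuous_subtype_val
    refine le_trans (closure_minimal hsupp hclosed) ?_
    intro x hx
    have : (x : EuclideanSpace ℝ (Fin 3)) ∈ Metric.ball (x₀ : EuclideanSpace ℝ (Fin 3)) r := by
      have := Set.mem_preimage.mp hx
      rw [Metric.mem_closedBall] at this
      rw [Metric.mem_ball]
      linarith
    have : (x : EuclideanSpace ℝ (Fin 3)) ∈ W := hball this
    rw [← hWU]
    exact this
  · -- electric moments
    intro m
    have := momint c (Sum.inl m)
    calc (∫ x, (inner ℝ (φ x • ∑ j, c j • Afield j (x : EuclideanSpace ℝ (Fin 3)))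
          (Efield m (x : EuclideanSpace ℝ (Fin 3))) : ℝ) ∂sphereMeasure)
        = G.mulVec c (Sum.inl m) := momint c (Sum.inl m)
      _ = vp p (Sum.inl m) := by rw [hmulvec]
      _ = p.1 m := rfl
  · -- magnetic moments
    intro m
    calc (∫ x, (inner ℝ (φ x • ∑ j, c j • Afield j (x : EuclideanSpace ℝ (Fin 3)))
          (Hfield m (x : EuclideanSpace ℝ (Fin 3))) : ℝ) ∂sphereMeasure)
        = G.mulVec c (Sum.inr m) := momint c (Sum.inr m)
      _ = vp p (Sum.inr m) := by rw [hmulvec]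
      _ = p.2 m := rfl
  · -- sup bound
    intro x
    have hx1 : ‖(x : EuclideanSpace ℝ (Fin 3))‖ = 1 := mem_sphere_zero_iff_norm.mp x.2
    show ‖φ x • ∑ j, c j • Afield j (x : EuclideanSpace ℝ (Fin 3))‖ ≤ 24 * (K + 1) * ‖p‖
    have hφ01 : |φ x| ≤ 1 := by
      rw [abs_of_nonneg bump.nonneg]
      exact bump.le_one
    have hterm : ∀ j : Fin 3 ⊕ Fin 3, ‖c j • Afield j (x : EuclideanSpace ℝ (Fin 3))‖
        ≤ (K * ‖p‖) * 4 := by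
      intro j
      rw [norm_smul, Real.norm_eq_abs]
      exact mul_le_mul (hcoefbound p j) (norm_Afield_le j _ hx1) (norm_nonneg _)
        (mul_nonneg hKnn (norm_nonneg p))
    calc ‖φ x • ∑ j, c j • Afield j (x : EuclideanSpace ℝ (Fin 3))‖
        = |φ x| * ‖∑ j, c j • Afield j (x : EuclideanSpace ℝ (Fin 3))‖ := by
          rw [norm_smul, Real.norm_eq_abs]
      _ ≤ 1 * ‖∑ j, c j • Afield j (x : EuclideanSpace ℝ (Fin 3))‖ :=
          mul_le_mul_of_nonneg_right hφ01 (norm_nonneg _)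
      _ = ‖∑ j, c j • Afield j (x : EuclideanSpace ℝ (Fin 3))‖ := one_mul _
      _ ≤ ∑ j, ‖c j • Afield j (x : EuclideanSpace ℝ (Fin 3))‖ := norm_sum_le _ _
      _ ≤ ∑ _j : Fin 3 ⊕ Fin 3, (K * ‖p‖) * 4 := Finset.sum_le_sum fun j _ => hterm j
      _ = 6 * ((K * ‖p‖) * 4) := by
          rw [Finset.sum_const]
          simp [Fintype.card_sum]
      _ = 24 * (K * ‖p‖) := by ring
      _ ≤ 24 * ((K + 1) * ‖p‖) := by
          have h4 : K * ‖p‖ ≤ (K + 1) * ‖p‖ :=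
            mul_le_mul_of_nonneg_right (by linarith) (norm_nonneg p)
          linarith
      _ = 24 * (K + 1) * ‖p‖ := by ring
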